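/- Let n ≥ 2 and let s ∈ S̃_n be dominant. Then the inversion number of s (which equals the Coxeter length of s) is given by inv(s) = Σ_{i=1}^{n-1} (n-i)·γ_i(s). -/

import Mathlib

/-- `s` is an element of the affine symmetric group `S̃_n`: a bijection of `ℤ` commuting
with translation by `n` and with normalized sum over a fundamental window. -/
def IsAffPerm (n : ℕ) (s : ℤ → ℤ) : Prop :=
  Function.Bijective s ∧ (∀ i : ℤ, s (i + n) = s i + n) ∧
    ∑ i ∈ Finset.Icc (1 : ℤ) (n : ℤ), s i = ∑ i ∈ Finset.Icc (1 : ℤ) (n : ℤ), i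

/-- `s` is dominant: `s(1) < s(2) < ⋯ < s(n)`. -/
def IsDominant (n : ℕ) (s : ℤ → ℤ) : Prop :=
  ∀ i : ℤ, 1 ≤ i → i < (n : ℤ) → s i < s (i + 1)

/-- The inversion number of `s` (equal to the Coxeter length). -/
noncomputable def invNum (n : ℕ) (s : ℤ → ℤ) : ℕ :=
  Set.ncard {p : ℤ × ℤ | 1 ≤ p.1 ∧ p.1 ≤ (n : ℤ) ∧ p.1 < p.2 ∧ s p.2 < s p.1}

/-- `γ_i(s)` : the number of integers `t` with `s(i) < t < s(i+1)` such that
`t ≢ s(k) (mod n)` for all `i+1 ≤ k ≤ n`. -/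
noncomputable def gam (n : ℕ) (s : ℤ → ℤ) (i : ℤ) : ℕ :=
  Set.ncard {t : ℤ | s i < t ∧ t < s (i + 1) ∧
    ∀ k : ℤ, i + 1 ≤ k → k ≤ (n : ℤ) → ¬ t ≡ s k [ZMOD (n : ℤ)]}

namespace AffAux

variable {n : ℕ} {s : ℤ → ℤ}


variable {n : ℕ} {s : ℤ → ℤ}

lemma shift (hs : IsAffPerm n s) : ∀ (m j : ℤ), s (j + m * n) = s j + m * n := by
  intro m
  induction m using Int.induction_on with
  | zero => simp
  | succ k ih =>
      intro j
      have h1 : j + ((k : ℤ) + 1) * n = (j + k * n) + n := by ring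
      rw [h1, hs.2.1, ih]; ring
  | pred k ih =>
      intro j
      have h2 := hs.2.1 (j + (-(k:ℤ) - 1) * n)
      have h3 : j + (-(k:ℤ) - 1) * n + n = j + (-(k:ℤ)) * n := by ring
      rw [h3, ih] at h2
      have : s (j + (-(k:ℤ) - 1) * n) = s j + (-(k:ℤ)) * n - n := by linarith
      rw [this]; ring

lemma mono (hd : IsDominant n s) {a : ℤ} (ha : 1 ≤ a) :
    ∀ b, a ≤ b → b ≤ (n:ℤ) → s a ≤ s b := by
  intro b hab hbn
  obtain ⟨d, rfl⟩ : ∃ d : ℕ, b = a + d := ⟨(b - a).toNat, by omega⟩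
  clear hab
  induction d with
  | zero => simp
  | succ d ih =>
      have hcast : a + ((d + 1 : ℕ) : ℤ) = (a + d) + 1 := by push_cast; ring
      rw [hcast] at hbn ⊢
      have h1 : s (a + d) < s (a + d + 1) := hd _ (by omega) (by omega)
      have h2 : s a ≤ s (a + d) := ih (by omega)
      linarith

lemma decomp (hs : IsAffPerm n s) (hn : 2 ≤ n) (j : ℤ) :
    ∃ k m : ℤ, 1 ≤ k ∧ k ≤ (n:ℤ) ∧ j = k + m * n ∧ s j = s k + m * n := by
  have hn0 : (0:ℤ) < (n:ℤ) := by exact_mod_cast Nat.pos_of_ne_zero (by omega)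
  have e1 : 0 ≤ (j-1) % (n:ℤ) := Int.emod_nonneg _ (by omega)
  have e2 : (j-1) % (n:ℤ) < n := Int.emod_lt_of_pos _ hn0
  have e3 : (j-1) % (n:ℤ) + (n:ℤ) * ((j-1) / (n:ℤ)) = j - 1 := Int.emod_add_mul_ediv _ _
  have e4 : j = ((j-1) % (n:ℤ) + 1) + ((j-1) / (n:ℤ)) * (n:ℤ) := by
    have := mul_comm ((j-1) / (n:ℤ)) (n:ℤ); linarith
  refine ⟨(j-1) % n + 1, (j-1) / n, by omega, by omega, e4, ?_⟩
  have key := shift hs ((j-1) / (n:ℤ)) ((j-1) % (n:ℤ) + 1)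
  rw [← e4] at key
  exact key

lemma res_eq (hs : IsAffPerm n s) (hn : 2 ≤ n) {k k' : ℤ}
    (hk1 : 1 ≤ k) (hk2 : k ≤ (n:ℤ)) (hk1' : 1 ≤ k') (hk2' : k' ≤ (n:ℤ))
    (h : s k ≡ s k' [ZMOD (n:ℤ)]) : k = k' := by
  have hn0 : (0:ℤ) < (n:ℤ) := by exact_mod_cast Nat.pos_of_ne_zero (by omega)
  obtain ⟨m, hm⟩ := Int.ModEq.dvd h
  have h1 : s k' = s (k + m * n) := by rw [shift hs]; linarith
  have h2 : k' = k + m * n := hs.1.1 h1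
  have hm0 : m = 0 := by
    rcases lt_trichotomy m 0 with hh | hh | hh
    · have : m * (n:ℤ) ≤ -1 * n := mul_le_mul_of_nonneg_right (by omega) hn0.le
      linarith
    · exact hh
    · have : 1 * (n:ℤ) ≤ m * n := mul_le_mul_of_nonneg_right (by omega) hn0.le
      linarith
  rw [hm0] at h2; simpa using h2.symm


lemma npos (hn : 2 ≤ n) : (0:ℤ) < (n:ℤ) := by exact_mod_cast Nat.pos_of_ne_zero (by omega)

lemma decomp_big (hs : IsAffPerm n s) (hn : 2 ≤ n) {j : ℤ} (hj : (n:ℤ) < j) :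
    ∃ k m : ℤ, 1 ≤ k ∧ k ≤ (n:ℤ) ∧ 1 ≤ m ∧ (n:ℤ) ≤ m * n ∧
      j = k + m * n ∧ s j = s k + m * n := by
  have hn0 := npos (n := n) hn
  obtain ⟨k, m, hk1, hk2, hjd, hsj⟩ := decomp hs hn j
  have hm : 1 ≤ m := by
    by_contra h'
    push_neg at h'
    have : m * (n:ℤ) ≤ 0 * n := mul_le_mul_of_nonneg_right (by omega) hn0.le
    simp only [zero_mul] at this
    linarith
  have hmn : (n:ℤ) ≤ m * n := by
    have : (1:ℤ) * n ≤ m * n := mul_le_mul_of_nonneg_right hm hn0.le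
    linarith
  exact ⟨k, m, hk1, hk2, hm, hmn, hjd, hsj⟩

/-- The fiber set `F i = {j > n : s j < s i}`. -/
def F (n : ℕ) (s : ℤ → ℤ) (i : ℤ) : Set ℤ := {j | (n:ℤ) < j ∧ s j < s i}

/-- The strip set `D i = {j > n : s i < s j < s (i+1)}`. -/
def D (n : ℕ) (s : ℤ → ℤ) (i : ℤ) : Set ℤ := {j | (n:ℤ) < j ∧ s i < s j ∧ s j < s (i + 1)}

lemma sj_lb (hs : IsAffPerm n s) (hd : IsDominant n s) (hn : 2 ≤ n)
    {j : ℤ} (hj : (n:ℤ) < j) : s 1 + n ≤ s j := by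
  obtain ⟨k, m, hk1, hk2, _, hmn, _, hsj⟩ := decomp_big hs hn hj
  have hk : s 1 ≤ s k := mono hd le_rfl k hk1 hk2
  linarith

lemma F_finite (hs : IsAffPerm n s) (hd : IsDominant n s) (hn : 2 ≤ n) (i : ℤ) :
    (F n s i).Finite := by
  apply Set.Finite.subset
    (Set.Finite.preimage hs.1.1.injOn (Set.finite_Icc (s 1 + (n:ℤ)) (s i - 1)))
  intro j hj
  exact ⟨sj_lb hs hd hn hj.1, by have := hj.2; omega⟩

lemma D_finite (hs : IsAffPerm n s) (hd : IsDominant n s) (hn : 2 ≤ n) (i : ℤ) :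
    (D n s i).Finite := by
  apply (F_finite hs hd hn (i+1)).subset
  intro j hj
  exact ⟨hj.1, hj.2.2⟩

lemma F_one (hs : IsAffPerm n s) (hd : IsDominant n s) (hn : 2 ≤ n) :
    F n s 1 = ∅ := by
  ext j
  simp only [F, Set.mem_setOf_eq, Set.mem_empty_iff_false, iff_false, not_and, not_lt]
  intro hj
  have := sj_lb hs hd hn hj
  have := npos (n := n) hn
  omega

lemma F_succ (hs : IsAffPerm n s) (hd : IsDominant n s) (hn : 2 ≤ n)
    {i : ℤ} (hi1 : 1 ≤ i) (hi2 : i ≤ (n:ℤ) - 1) :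
    F n s (i + 1) = F n s i ∪ D n s i := by
  ext j
  simp only [F, D, Set.mem_setOf_eq, Set.mem_union]
  constructor
  · rintro ⟨hj, hlt⟩
    rcases lt_trichotomy (s j) (s i) with h | h | h
    · exact Or.inl ⟨hj, h⟩
    · exact absurd (hs.1.1 h) (by omega)
    · exact Or.inr ⟨hj, h, hlt⟩
  · have hii : s i < s (i + 1) := hd i hi1 (by omega)
    rintro (⟨hj, h⟩ | ⟨hj, h1, h2⟩)
    · exact ⟨hj, by linarith⟩
    · exact ⟨hj, h2⟩

lemma FD_disj (i : ℤ) : Disjoint (F n s i) (D n s i) := by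
  rw [Set.disjoint_left]
  rintro j ⟨_, h1⟩ ⟨_, h2, _⟩
  exact absurd h1 (by omega)

lemma modeq_of_decomp {t a m : ℤ} (h : t = a + m * n) : t ≡ a [ZMOD (n:ℤ)] := by
  rw [Int.modEq_iff_dvd]
  exact ⟨-m, by linarith⟩

lemma gamSet_eq (hs : IsAffPerm n s) (hd : IsDominant n s) (hn : 2 ≤ n)
    {i : ℤ} (hi1 : 1 ≤ i) (hi2 : i ≤ (n:ℤ) - 1) :
    {t : ℤ | s i < t ∧ t < s (i + 1) ∧
      ∀ k : ℤ, i + 1 ≤ k → k ≤ (n : ℤ) → ¬ t ≡ s k [ZMOD (n : ℤ)]} = s '' D n s i := by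
  ext t
  simp only [Set.mem_setOf_eq, Set.mem_image]
  constructor
  · rintro ⟨h1, h2, h3⟩
    obtain ⟨j, rfl⟩ := hs.1.2 t
    obtain ⟨k, m, hk1, hk2, hjd, hsj⟩ := decomp hs hn j
    have hmod : s j ≡ s k [ZMOD (n:ℤ)] := modeq_of_decomp hsj
    have hki : k ≤ i := by
      by_contra h'
      exact h3 k (by omega) hk2 hmod
    have hski : s k ≤ s i := mono hd hk1 i hki (by omega)
    have hm : 1 ≤ m := by
      by_contra h'
      push_neg at h'
      have : m * (n:ℤ) ≤ 0 * n := mul_le_mul_of_nonneg_right (by omega) (npos (n := n) hn).le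
      simp only [zero_mul] at this
      linarith
    have hmn : (n:ℤ) ≤ m * n := by
      have : (1:ℤ) * n ≤ m * n := mul_le_mul_of_nonneg_right hm (npos (n := n) hn).le
      linarith
    exact ⟨j, ⟨by omega, h1, h2⟩, rfl⟩
  · rintro ⟨j, ⟨hj, h1, h2⟩, rfl⟩
    refine ⟨h1, h2, ?_⟩
    intro k' hk1' hk2' hcon
    obtain ⟨k, m, hk1, hk2, _, hmn, _, hsj⟩ := decomp_big hs hn hj
    have hmod : s j ≡ s k [ZMOD (n:ℤ)] := modeq_of_decomp hsj
    have hkk : k = k' := res_eq hs hn hk1 hk2 (by omega) hk2' (hmod.symm.trans hcon)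
    have : s (i + 1) ≤ s k := by
      rw [hkk]
      exact mono hd (by omega) k' hk1' hk2'
    linarith


lemma gam_eq_D (hs : IsAffPerm n s) (hd : IsDominant n s) (hn : 2 ≤ n)
    {i : ℤ} (hi1 : 1 ≤ i) (hi2 : i ≤ (n:ℤ) - 1) :
    gam n s i = (D n s i).ncard := by
  rw [gam, gamSet_eq hs hd hn hi1 hi2, Set.ncard_image_of_injective _ hs.1.1]

lemma F_card_succ (hs : IsAffPerm n s) (hd : IsDominant n s) (hn : 2 ≤ n)
    {i : ℤ} (hi1 : 1 ≤ i) (hi2 : i ≤ (n:ℤ) - 1) :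
    (F n s (i + 1)).ncard = (F n s i).ncard + gam n s i := by
  rw [gam_eq_D hs hd hn hi1 hi2, F_succ hs hd hn hi1 hi2,
    Set.ncard_union_eq (FD_disj i) (F_finite hs hd hn i) (D_finite hs hd hn i)]

lemma invNum_eq_sum (hs : IsAffPerm n s) (hd : IsDominant n s) (hn : 2 ≤ n) :
    invNum n s = ∑ i ∈ Finset.Icc (1:ℤ) (n:ℤ), (F n s i).ncard := by
  classical
  have hfin := F_finite hs hd hn
  set T : Finset (ℤ × ℤ) := (Finset.Icc (1:ℤ) (n:ℤ)).biUnion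
      (fun i => (hfin i).toFinset.image (fun j => ((i, j) : ℤ × ℤ))) with hT
  have hset : (T : Set (ℤ × ℤ)) =
      {p : ℤ × ℤ | 1 ≤ p.1 ∧ p.1 ≤ (n:ℤ) ∧ p.1 < p.2 ∧ s p.2 < s p.1} := by
    ext ⟨a, b⟩
    simp only [hT, Finset.coe_biUnion, Finset.coe_image, Set.mem_iUnion, Finset.mem_coe,
      Finset.mem_Icc, Set.mem_image, Set.Finite.mem_toFinset, Set.mem_setOf_eq,
      Prod.mk.injEq, F]
    constructor
    · rintro ⟨i, ⟨hi1, hi2⟩, j, ⟨hj, hsj⟩, rfl, rfl⟩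
      exact ⟨hi1, hi2, by omega, hsj⟩
    · rintro ⟨h1, h2, h3, h4⟩
      refine ⟨a, ⟨h1, h2⟩, b, ⟨?_, h4⟩, rfl, rfl⟩
      by_contra hb
      push_neg at hb
      have := mono hd h1 b (by omega) hb
      linarith
  have hcard : invNum n s = T.card := by
    rw [invNum, ← hset, Set.ncard_coe_finset]
  rw [hcard, Finset.card_biUnion]
  · apply Finset.sum_congr rfl
    intro i _
    rw [Finset.card_image_of_injective _ (fun x y h => (Prod.ext_iff.mp h).2),
      Set.ncard_eq_toFinset_card _ (hfin i)]
  · intro x hx y hy hxy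
    simp only [Finset.disjoint_left, Finset.mem_image, Set.Finite.mem_toFinset]
    rintro ⟨a, b⟩ ⟨j, _, hj⟩ ⟨j', _, hj'⟩
    apply hxy
    rw [Prod.mk.injEq] at hj hj'
    omega


lemma g_formula (hs : IsAffPerm n s) (hd : IsDominant n s) (hn : 2 ≤ n) :
    ∀ i : ℕ, 1 ≤ i → i ≤ n →
      (F n s (i:ℤ)).ncard = ∑ l ∈ Finset.Icc 1 (i-1), gam n s (l:ℤ) := by
  intro i
  induction i with
  | zero => omega
  | succ i ih =>
      intro _ hle
      rcases Nat.eq_zero_or_pos i with h0 | h0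
      · subst h0
        simp [F_one hs hd hn]
      · obtain ⟨d, rfl⟩ : ∃ d : ℕ, i = d + 1 := ⟨i - 1, by omega⟩
        have hii : (((d+1)+1 : ℕ) : ℤ) = ((d+1 : ℕ) : ℤ) + 1 := by push_cast; ring
        rw [hii, F_card_succ hs hd hn (by exact_mod_cast h0) (by push_cast; omega),
          ih (by omega) (by omega)]
        have e1 : (d + 1 + 1) - 1 = d + 1 := rfl
        have e2 : (d + 1) - 1 = d := rfl
        rw [e1, e2, Finset.sum_Icc_succ_top (by omega)]

lemma sum_swap_eq (γ : ℕ → ℕ) (hn : 2 ≤ n) :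
    ∑ i ∈ Finset.Icc 1 n, ∑ l ∈ Finset.Icc 1 (i-1), γ l
      = ∑ l ∈ Finset.Icc 1 (n-1), (n - l) * γ l := by
  classical
  have step1 : ∀ i ∈ Finset.Icc 1 n,
      ∑ l ∈ Finset.Icc 1 (i-1), γ l
        = ∑ l ∈ Finset.Icc 1 (n-1), if l + 1 ≤ i then γ l else 0 := by
    intro i hi
    rw [Finset.mem_Icc] at hi
    rw [← Finset.sum_filter]
    apply Finset.sum_congr _ (fun _ _ => rfl)
    ext l
    simp only [Finset.mem_filter, Finset.mem_Icc]
    omega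
  rw [Finset.sum_congr rfl step1, Finset.sum_comm]
  apply Finset.sum_congr rfl
  intro l hl
  rw [Finset.mem_Icc] at hl
  rw [← Finset.sum_filter]
  have hfe : (Finset.Icc 1 n).filter (fun i => l + 1 ≤ i) = Finset.Icc (l+1) n := by
    ext i
    simp only [Finset.mem_filter, Finset.mem_Icc]
    omega
  rw [hfe, Finset.sum_const, Nat.card_Icc, smul_eq_mul]
  congr 1
  omega

lemma main_aux (hs : IsAffPerm n s) (hd : IsDominant n s) (hn : 2 ≤ n) :
    invNum n s = ∑ i ∈ Finset.Icc 1 (n - 1), (n - i) * gam n s (i : ℤ) := by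
  rw [invNum_eq_sum hs hd hn]
  have reindex : ∑ i ∈ Finset.Icc (1:ℤ) (n:ℤ), (F n s i).ncard
      = ∑ i ∈ Finset.Icc 1 n, (F n s (i:ℤ)).ncard := by
    refine Finset.sum_nbij' (fun a : ℤ => a.toNat) (fun b : ℕ => (b : ℤ)) ?_ ?_ ?_ ?_ ?_ <;>
        simp only [Finset.mem_Icc]
    · intros; omega
    · intros; omega
    · intros; omega
    · intros; omega
    · intro a ha
      rw [Int.toNat_of_nonneg (by omega)]
  have congr2 : ∑ i ∈ Finset.Icc 1 n, (F n s (i:ℤ)).ncard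
      = ∑ i ∈ Finset.Icc 1 n, ∑ l ∈ Finset.Icc 1 (i-1), gam n s (l:ℤ) := by
    apply Finset.sum_congr rfl
    intro i hi
    rw [Finset.mem_Icc] at hi
    exact g_formula hs hd hn i hi.1 hi.2
  rw [reindex, congr2, sum_swap_eq _ hn]


end AffAux

/-- For a dominant element `s` of the affine symmetric group,
`inv(s) = Σ_{i=1}^{n-1} (n-i)·γ_i(s)`. -/
theorem inv_eq_weighted_sum_gamma (n : ℕ) (hn : 2 ≤ n) (s : ℤ → ℤ)
    (hs : IsAffPerm n s) (hd : IsDominant n s) :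
    invNum n s = ∑ i ∈ Finset.Icc 1 (n - 1), (n - i) * gam n s (i : ℤ) :=
  AffAux.main_aux hs hd hn
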